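/- Let k ≥ 1 and 0 < β < 2 with β ≤ k. Set α₁ = (2−β)/4 and α₂ = (2−β)/2. There is a constant c such that for all b > 0, ∬_{A₂} |ξ|^{β−k}/(|ξ|⁴ + τ²) dτ dξ ≤ c b^{−2}, where A₂ = {(τ,ξ) ∈ ℝ × ℝ^k : |τ|^{α₁} < |ξ|^{α₂} and |ξ|^{α₂} > b}. -/

import Mathlib

open MeasureTheory Real Set Metric

private lemma aux_inner (a : ℝ) (ha : 0 < a) :
    Integrable (fun τ : ℝ => (a ^ 2 + τ ^ 2)⁻¹) ∧
      ∫ τ : ℝ, (a ^ 2 + τ ^ 2)⁻¹ = π * a⁻¹ := by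
  have hne : a ≠ 0 := ha.ne'
  have key : (fun τ : ℝ => (a ^ 2 + τ ^ 2)⁻¹)
      = fun τ => a⁻¹ * (a⁻¹ * (1 + (τ / a) ^ 2)⁻¹) := by
    funext τ
    have h1 : a ^ 2 + τ ^ 2 = a ^ 2 * (1 + (τ / a) ^ 2) := by field_simp
    rw [h1, mul_inv, sq a, mul_inv]; ring
  have hint : Integrable fun τ : ℝ => (1 + (τ / a) ^ 2)⁻¹ :=
    integrable_inv_one_add_sq.comp_div hne
  constructor
  · rw [key]; exact (hint.const_mul _).const_mul _
  · rw [key]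
    rw [integral_const_mul, integral_const_mul,
      Measure.integral_comp_div (fun u : ℝ => (1 + u ^ 2)⁻¹) a,
      integral_univ_inv_one_add_sq, smul_eq_mul, abs_of_pos ha]
    field_simp

private lemma aux_radial (k : ℕ) (hk : 1 ≤ k) (β : ℝ) (hβ2 : β < 2) (R : ℝ) (hR0 : 0 < R) :
    ∫ ξ in {ξ : EuclideanSpace ℝ (Fin k) | R < ‖ξ‖}, ‖ξ‖ ^ (β - k - 2)
      = (k : ℝ) * (volume (ball (0 : EuclideanSpace ℝ (Fin k)) 1)).toReal
          * (R ^ (β - 2) / (2 - β)) := by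
  haveI : Nontrivial (EuclideanSpace ℝ (Fin k)) :=
    Module.nontrivial_of_finrank_pos (R := ℝ) (by rw [finrank_euclideanSpace_fin]; omega)
  set s : ℝ := β - k - 2 with hs
  set g : ℝ → ℝ := (Ioi R).indicator (fun y => y ^ s) with hg
  have hSm : MeasurableSet {ξ : EuclideanSpace ℝ (Fin k) | R < ‖ξ‖} :=
    (isOpen_lt continuous_const continuous_norm).measurableSet
  have h1 : ∫ ξ in {ξ : EuclideanSpace ℝ (Fin k) | R < ‖ξ‖}, ‖ξ‖ ^ s
      = ∫ x : EuclideanSpace ℝ (Fin k), g ‖x‖ := by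
    rw [← integral_indicator hSm]
    apply integral_congr_ae
    filter_upwards with x
    simp [hg, Set.indicator_apply, Set.mem_setOf_eq]
  rw [h1, integral_fun_norm_addHaar (volume : Measure (EuclideanSpace ℝ (Fin k))) g,
    finrank_euclideanSpace_fin]
  have h2 : ∀ y : ℝ, y ^ (k - 1) • g y
      = (Ioi R).indicator (fun y : ℝ => y ^ (k - 1) * y ^ s) y := by
    intro y
    simp only [hg, Set.indicator_apply, smul_eq_mul]
    split_ifs <;> simp
  have h3 : ∫ y in Ioi (0 : ℝ), y ^ (k - 1) • g y = R ^ (β - 2) / (2 - β) := by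
    simp_rw [h2]
    rw [setIntegral_indicator measurableSet_Ioi]
    have h4 : Ioi (0 : ℝ) ∩ Ioi R = Ioi R := by
      rw [Set.Ioi_inter_Ioi, max_eq_right hR0.le]
    rw [h4]
    have h5 : ∀ y ∈ Ioi R, y ^ (k - 1) * y ^ s = y ^ (β - 3) := by
      intro y hy
      have hy0 : 0 < y := hR0.trans hy
      rw [← Real.rpow_natCast y (k - 1), ← Real.rpow_add hy0]
      congr 1
      rw [Nat.cast_sub hk]
      push_cast
      rw [hs]; ring
    rw [setIntegral_congr_fun measurableSet_Ioi h5,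
      integral_Ioi_rpow_of_lt (by linarith) hR0]
    have : β - 3 + 1 = β - 2 := by ring
    rw [this]
    rw [div_eq_div_iff (by intro h; rw [sub_eq_zero] at h; nlinarith) (by linarith)]
    ring
  rw [h3, nsmul_eq_mul, smul_eq_mul, mul_assoc]; rfl

private lemma aux_integrableOn (k : ℕ) (hk : 1 ≤ k) (β : ℝ) (hβ2 : β < 2) (hβ0 : 0 < β)
    (R : ℝ) (hR0 : 0 < R) :
    IntegrableOn (fun ξ : EuclideanSpace ℝ (Fin k) => ‖ξ‖ ^ (β - k - 2))
      {ξ : EuclideanSpace ℝ (Fin k) | R < ‖ξ‖} := by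
  set s : ℝ := β - k - 2 with hs
  have hs0 : s ≤ 0 := by
    have : (1 : ℝ) ≤ k := by exact_mod_cast hk
    rw [hs]; linarith
  have hSm : MeasurableSet {ξ : EuclideanSpace ℝ (Fin k) | R < ‖ξ‖} :=
    (isOpen_lt continuous_const continuous_norm).measurableSet
  have hgi : Integrable (fun x : EuclideanSpace ℝ (Fin k) => (1 + ‖x‖) ^ (-((k : ℝ) + 2 - β))) :=
    integrable_one_add_norm (by rw [finrank_euclideanSpace_fin]; linarith)
  have hgi' : Integrable (fun x : EuclideanSpace ℝ (Fin k) => (1 + ‖x‖) ^ s) := by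
    have : -((k : ℝ) + 2 - β) = s := by rw [hs]; ring
    simpa [this] using hgi
  set C : ℝ := (1 + R⁻¹) ^ (-s) with hC
  apply Integrable.mono' ((hgi'.const_mul C).integrableOn)
  · exact (Measurable.aestronglyMeasurable (by fun_prop))
  · filter_upwards [ae_restrict_mem hSm] with ξ hξ
    have hξR : R < ‖ξ‖ := hξ
    have h0 : 0 < ‖ξ‖ := hR0.trans hξR
    have h1R : (0 : ℝ) < 1 + R⁻¹ := by positivity
    have h1 : (1 + R⁻¹)⁻¹ * (1 + ‖ξ‖) ≤ ‖ξ‖ := by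
      rw [inv_mul_le_iff₀ h1R]
      have : (1 : ℝ) ≤ ‖ξ‖ / R := (one_le_div hR0).2 hξR.le
      have h2 : (1 + R⁻¹) * ‖ξ‖ = ‖ξ‖ + ‖ξ‖ / R := by field_simp
      rw [h2]; linarith
    have h2 : ‖ξ‖ ^ s ≤ ((1 + R⁻¹)⁻¹ * (1 + ‖ξ‖)) ^ s :=
      Real.rpow_le_rpow_of_nonpos (by positivity) h1 hs0
    have h3 : ((1 + R⁻¹)⁻¹ * (1 + ‖ξ‖)) ^ s = C * (1 + ‖ξ‖) ^ s := by
      rw [Real.mul_rpow (by positivity) (by positivity), Real.inv_rpow h1R.le,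
        ← Real.rpow_neg h1R.le, hC]
    rw [Real.norm_of_nonneg (Real.rpow_nonneg h0.le _)]
    calc ‖ξ‖ ^ s ≤ ((1 + R⁻¹)⁻¹ * (1 + ‖ξ‖)) ^ s := h2
      _ = C * (1 + ‖ξ‖) ^ s := h3

theorem stmt_13 (k : ℕ) (hk : 1 ≤ k) (β : ℝ) (hβ0 : 0 < β) (hβ2 : β < 2) (hβk : β ≤ k) :
    ∃ c : ℝ, ∀ b > (0 : ℝ),
      ∫ p in {p : ℝ × EuclideanSpace ℝ (Fin k) |
          |p.1| ^ ((2 - β) / 4) < ‖p.2‖ ^ ((2 - β) / 2) ∧ ‖p.2‖ ^ ((2 - β) / 2) > b},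
        ‖p.2‖ ^ (β - (k : ℝ)) / (‖p.2‖ ^ (4 : ℕ) + p.1 ^ 2) ≤
      c * b ^ (-2 : ℝ) := by
  have h2β : (0 : ℝ) < 2 - β := by linarith
  set E := EuclideanSpace ℝ (Fin k)
  set K : ℝ := (k : ℝ) * (volume (ball (0 : E) 1)).toReal with hK
  have hK0 : 0 ≤ K := by positivity
  refine ⟨π * K * (2 - β)⁻¹, fun b hb => ?_⟩
  set F : ℝ × E → ℝ := fun p => ‖p.2‖ ^ (β - (k : ℝ)) / (‖p.2‖ ^ (4 : ℕ) + p.1 ^ 2) with hF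
  have hF0 : ∀ p, 0 ≤ F p := fun p =>
    div_nonneg (Real.rpow_nonneg (norm_nonneg _) _) (by positivity)
  have hFm : Measurable F := by fun_prop
  set R : ℝ := b ^ (2 / (2 - β)) with hR
  have hR0 : 0 < R := Real.rpow_pos_of_pos hb _
  set S : Set E := {ξ : E | R < ‖ξ‖} with hS
  have hSm : MeasurableSet S := (isOpen_lt continuous_const continuous_norm).measurableSet
  set A : Set (ℝ × E) := {p : ℝ × E |
      |p.1| ^ ((2 - β) / 4) < ‖p.2‖ ^ ((2 - β) / 2) ∧ ‖p.2‖ ^ ((2 - β) / 2) > b} with hA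
  have hsub : A ⊆ Set.univ ×ˢ S := by
    rintro ⟨τ, ξ⟩ ⟨-, h2⟩
    refine ⟨trivial, ?_⟩
    show R < ‖ξ‖
    have hαpos : (0 : ℝ) < (2 - β) / 2 := by linarith
    calc R = b ^ (((2 - β) / 2)⁻¹) := by rw [hR, inv_div]
      _ < (‖ξ‖ ^ ((2 - β) / 2)) ^ (((2 - β) / 2)⁻¹) :=
          Real.rpow_lt_rpow hb.le h2 (by positivity)
      _ = ‖ξ‖ := by
          rw [← Real.rpow_mul (norm_nonneg ξ), mul_inv_cancel₀ hαpos.ne', Real.rpow_one]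
  -- inner integral computation
  have inner_eq : ∀ ξ : E, 0 < ‖ξ‖ →
      ∫⁻ τ : ℝ, ENNReal.ofReal (F (τ, ξ)) = ENNReal.ofReal (π * ‖ξ‖ ^ (β - k - 2)) := by
    intro ξ hξ
    have ha : (0 : ℝ) < ‖ξ‖ ^ 2 := by positivity
    obtain ⟨hInt, hVal⟩ := aux_inner (‖ξ‖ ^ 2) ha
    have hFa : ∀ τ : ℝ, F (τ, ξ) = ‖ξ‖ ^ (β - (k : ℝ)) * (((‖ξ‖ ^ 2) ^ 2 + τ ^ 2)⁻¹) := by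
      intro τ
      have h4 : ((‖ξ‖ : ℝ) ^ 2) ^ 2 = ‖ξ‖ ^ (4 : ℕ) := by ring
      rw [hF]; simp only []
      rw [h4, div_eq_mul_inv]
    have hInt' : Integrable (fun τ : ℝ => F (τ, ξ)) := by
      simp_rw [hFa]; exact hInt.const_mul _
    rw [← ofReal_integral_eq_lintegral_ofReal hInt' (ae_of_all _ fun τ => hF0 _)]
    congr 1
    simp_rw [hFa]
    rw [integral_const_mul, hVal]
    have h6 : ((‖ξ‖ : ℝ) ^ 2)⁻¹ = ‖ξ‖ ^ (-(2 : ℝ)) := by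
      rw [← Real.rpow_natCast ‖ξ‖ 2, ← Real.rpow_neg hξ.le]; norm_num
    have h7 : ‖ξ‖ ^ (β - (k : ℝ)) * ‖ξ‖ ^ (-(2 : ℝ)) = ‖ξ‖ ^ (β - k - 2) := by
      rw [← Real.rpow_add hξ]; congr 1
    rw [h6, ← h7]; ring
  -- main computation
  have key : ∫⁻ p in A, ENNReal.ofReal (F p)
      ≤ ENNReal.ofReal (π * K * (2 - β)⁻¹ * b ^ (-2 : ℝ)) := by
    calc ∫⁻ p in A, ENNReal.ofReal (F p)
        ≤ ∫⁻ p in Set.univ ×ˢ S, ENNReal.ofReal (F p) := lintegral_mono_set hsub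
      _ = ∫⁻ ξ in S, ∫⁻ τ : ℝ, ENNReal.ofReal (F (τ, ξ)) := by
          rw [Measure.volume_eq_prod, ← Measure.prod_restrict, Measure.restrict_univ,
            lintegral_prod_symm _ (hFm.ennreal_ofReal.aemeasurable)]
      _ = ∫⁻ ξ in S, ENNReal.ofReal (π * ‖ξ‖ ^ (β - k - 2)) := by
          apply setLIntegral_congr_fun hSm
          intro ξ hξ
          exact inner_eq ξ (hR0.trans hξ)
      _ = ENNReal.ofReal (∫ ξ in S, π * ‖ξ‖ ^ (β - k - 2)) := by
          rw [ofReal_integral_eq_lintegral_ofReal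
            ((aux_integrableOn k hk β hβ2 hβ0 R hR0).const_mul π)
            (ae_of_all _ fun ξ => by positivity)]
      _ ≤ ENNReal.ofReal (π * K * (2 - β)⁻¹ * b ^ (-2 : ℝ)) := by
          apply ENNReal.ofReal_le_ofReal
          rw [integral_const_mul, aux_radial k hk β hβ2 R hR0]
          have hRb : R ^ (β - 2) = b ^ (-2 : ℝ) := by
            rw [hR, ← Real.rpow_mul hb.le]
            congr 1
            field_simp
            ring
          rw [hRb, hK]
          rw [div_eq_mul_inv]
          ring_nf
          exact le_refl _
  calc ∫ p in A, F p
      = (∫⁻ p in A, ENNReal.ofReal (F p)).toReal :=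
        integral_eq_lintegral_of_nonneg_ae (ae_of_all _ hF0) hFm.aestronglyMeasurable
    _ ≤ π * K * (2 - β)⁻¹ * b ^ (-2 : ℝ) :=
        ENNReal.toReal_le_of_le_ofReal (by positivity) key
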